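/- Let n ≥ 1, 2 < p < ∞, let Ω ⊆ ℝⁿ be open, T > 0, and let v : ℝⁿ × ℝ → ℝ be of class C^{2,1} on Ω × (0,T) (continuous spatial gradient and spatial Hessian, and continuous time derivative). Then for every (x,t) ∈ Ω × (0,T), as ε → 0⁺ one has the asymptotic mean value formula: (n+2)/(p+n) · ⨍_{B_ε(x)} v(y, t−ε²) dy + (p−2)/(p+n) · sup_{|σ|=1} [v(x+εσ, t−ε²) + v(x−εσ, t−ε²)]/2 = v(x,t) + (ε²/(2(n+p))) · (Δv(x,t) + (p−2)·sup_{|σ|=1}⟨D²v(x,t)σ,σ⟩ − 2(n+p)·∂_t v(x,t)) + o(ε²). -/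

import Mathlib

open MeasureTheory Metric Set Filter Asymptotics Topology

set_option linter.unusedSectionVars false
section AuxAMVF
variable {n : ℕ} [NeZero n]


lemma norm_sq_integral_ball (ε : ℝ) (hε : 0 < ε) :
    ∫ z in ball (0 : EuclideanSpace ℝ (Fin n)) ε, ‖z‖ ^ 2 =
      (n : ℝ) * ((volume (ball (0 : EuclideanSpace ℝ (Fin n)) 1)).toReal *
        (ε ^ (n + 2) / (n + 2))) := by
  have hfr : Module.finrank ℝ (EuclideanSpace ℝ (Fin n)) = n := by simp
  rw [← integral_indicator measurableSet_ball]
  have hcongr : ∀ z : EuclideanSpace ℝ (Fin n),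
      (ball (0 : EuclideanSpace ℝ (Fin n)) ε).indicator (fun z => ‖z‖ ^ 2) z
        = (Iio ε).indicator (fun r => r ^ 2) ‖z‖ := by
    intro z
    by_cases h : ‖z‖ < ε <;>
      simp [Set.indicator_apply, mem_ball_zero_iff, h]
  rw [integral_congr_ae (Eventually.of_forall hcongr),
    integral_fun_norm_addHaar volume ((Iio ε).indicator (fun r => r ^ 2)), hfr]
  have h1 : ∀ y : ℝ, y ^ (n - 1) • (Iio ε).indicator (fun r => r ^ 2) y
      = (Iio ε).indicator (fun r => r ^ (n - 1) * r ^ 2) y := by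
    intro y; by_cases h : y < ε <;> simp [Set.indicator_apply, h]
  simp only [h1]
  rw [integral_indicator measurableSet_Iio, Measure.restrict_restrict measurableSet_Iio,
    Set.Iio_inter_Ioi]
  have h2 : ∫ y in Ioo (0:ℝ) ε, y ^ (n - 1) * y ^ 2 = ∫ y in Ioo (0:ℝ) ε, y ^ (n + 1) := by
    refine setIntegral_congr_fun measurableSet_Ioo (fun y hy => ?_)
    rw [← pow_add]
    have hn0 : n ≠ 0 := NeZero.ne n
    congr 1
    omega
  rw [h2, ← integral_Ioc_eq_integral_Ioo, ← intervalIntegral.integral_of_le hε.le,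
    integral_pow]
  simp only [nsmul_eq_mul, smul_eq_mul]
  push_cast
  rw [measureReal_def]
  ring

lemma setIntegral_comp_isometry
    (e : EuclideanSpace ℝ (Fin n) ≃ₗᵢ[ℝ] EuclideanSpace ℝ (Fin n))
    (g : EuclideanSpace ℝ (Fin n) → ℝ) (ε : ℝ) :
    ∫ z in ball (0 : EuclideanSpace ℝ (Fin n)) ε, g (e z) =
      ∫ z in ball (0 : EuclideanSpace ℝ (Fin n)) ε, g z := by
  have h := e.measurePreserving
  rw [← h.setIntegral_preimage_emb e.toHomeomorph.measurableEmbedding g (ball 0 ε),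
    e.preimage_ball, e.symm.map_zero]

/-- reflection in coordinate `i` -/
noncomputable def refl_i (i : Fin n) :
    EuclideanSpace ℝ (Fin n) ≃ₗᵢ[ℝ] EuclideanSpace ℝ (Fin n) :=
  LinearIsometryEquiv.piLpCongrRight 2
    (fun k => if k = i then LinearIsometryEquiv.neg ℝ else LinearIsometryEquiv.refl ℝ ℝ)

lemma refl_i_apply (i k : Fin n) (z : EuclideanSpace ℝ (Fin n)) :
    refl_i i z k = if k = i then -z k else z k := by
  rw [refl_i, LinearIsometryEquiv.piLpCongrRight_apply]
  by_cases h : k = i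
  · subst h; simp
  · simp [h]

lemma coord_mul_integral_ball (i j : Fin n) (hij : j ≠ i) (ε : ℝ) :
    ∫ z in ball (0 : EuclideanSpace ℝ (Fin n)) ε, z i * z j = 0 := by
  have h := setIntegral_comp_isometry (refl_i i) (fun z => z i * z j) ε
  have h2 : (∫ z in ball (0 : EuclideanSpace ℝ (Fin n)) ε,
      (fun z => z i * z j) ((refl_i i) z)) =
      -∫ z in ball (0 : EuclideanSpace ℝ (Fin n)) ε, z i * z j := by
    rw [← integral_neg]
    refine integral_congr_ae (Eventually.of_forall fun z => ?_)
    simp only [refl_i_apply, if_pos rfl, if_true, if_neg hij]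
    ring
  rw [h2] at h
  linarith

lemma coord_sq_integral_ball (i j : Fin n) (ε : ℝ) :
    ∫ z in ball (0 : EuclideanSpace ℝ (Fin n)) ε, (z i) ^ 2 =
      ∫ z in ball (0 : EuclideanSpace ℝ (Fin n)) ε, (z j) ^ 2 := by
  have h := setIntegral_comp_isometry
    (LinearIsometryEquiv.piLpCongrLeft 2 ℝ ℝ (Equiv.swap i j))
    (fun z => (z i) ^ 2) ε
  have happ : ∀ z : EuclideanSpace ℝ (Fin n),
      (LinearIsometryEquiv.piLpCongrLeft 2 ℝ ℝ (Equiv.swap i j) z) i = z j := by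
    intro z
    rw [LinearIsometryEquiv.piLpCongrLeft_apply]
    simp only [Equiv.piCongrLeft'_apply, Equiv.symm_symm, Equiv.symm_swap]
    rw [Equiv.swap_apply_left]
  simp only [happ] at h
  exact h.symm

lemma linear_integral_ball (L : EuclideanSpace ℝ (Fin n) →L[ℝ] ℝ) (ε : ℝ) :
    ∫ z in ball (0 : EuclideanSpace ℝ (Fin n)) ε, L z = 0 := by
  have h := setIntegral_comp_isometry (LinearIsometryEquiv.neg ℝ) (fun z => L z) ε
  have hfun : ∀ z : EuclideanSpace ℝ (Fin n), L ((LinearIsometryEquiv.neg ℝ) z) = -(L z) := by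
    intro z
    rw [show ((LinearIsometryEquiv.neg ℝ) z) = -z from rfl, map_neg]
  simp only [hfun, integral_neg] at h
  linarith

lemma coord_continuous (i : Fin n) :
    Continuous (fun z : EuclideanSpace ℝ (Fin n) => z i) :=
  (EuclideanSpace.proj (𝕜 := ℝ) i).continuous

lemma coord_mul_integrable (i j : Fin n) (ε : ℝ) :
    IntegrableOn (fun z : EuclideanSpace ℝ (Fin n) => z i * z j) (ball 0 ε) volume := by
  exact (ContinuousOn.integrableOn_compact (isCompact_closedBall _ _)
    (((coord_continuous i).mul (coord_continuous j)).continuousOn)).mono_set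
    ball_subset_closedBall

lemma euclidean_decomp (z : EuclideanSpace ℝ (Fin n)) :
    z = ∑ i, z i • EuclideanSpace.single i (1 : ℝ) := by
  have h := (EuclideanSpace.basisFun (Fin n) ℝ).sum_repr z
  simp only [EuclideanSpace.basisFun_repr, EuclideanSpace.basisFun_apply] at h
  exact h.symm

lemma bilinear_apply (H : EuclideanSpace ℝ (Fin n) →L[ℝ] EuclideanSpace ℝ (Fin n) →L[ℝ] ℝ)
    (z : EuclideanSpace ℝ (Fin n)) :
    H z z = ∑ i, ∑ j, H (EuclideanSpace.single i 1) (EuclideanSpace.single j 1) * (z i * z j) := by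
  have clm : ∀ (f : EuclideanSpace ℝ (Fin n) →L[ℝ] ℝ),
      f z = ∑ i, z i * f (EuclideanSpace.single i 1) := by
    intro f
    rw [show f z = f (∑ i, z i • EuclideanSpace.single i (1:ℝ)) from
      congrArg f (euclidean_decomp z), map_sum]
    exact Finset.sum_congr rfl fun i _ => by rw [_root_.map_smul, smul_eq_mul]
  have h1 : ∀ j, (H z) (EuclideanSpace.single j 1)
      = ∑ i, z i * H (EuclideanSpace.single i 1) (EuclideanSpace.single j 1) := by
    intro j
    simpa [ContinuousLinearMap.flip_apply] using clm (H.flip (EuclideanSpace.single j 1))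
  calc (H z) z = ∑ j, z j * (H z) (EuclideanSpace.single j 1) := clm (H z)
    _ = ∑ j, ∑ i, z j * (z i *
          H (EuclideanSpace.single i 1) (EuclideanSpace.single j 1)) := by
        simp only [h1, Finset.mul_sum]
    _ = ∑ i, ∑ j, H (EuclideanSpace.single i 1) (EuclideanSpace.single j 1) * (z i * z j) := by
        rw [Finset.sum_comm]
        exact Finset.sum_congr rfl fun i _ => Finset.sum_congr rfl fun j _ => by ring

lemma coord_sq_integrable (i : Fin n) (ε : ℝ) :
    IntegrableOn (fun z : EuclideanSpace ℝ (Fin n) => (z i) ^ 2) (ball 0 ε) volume := by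
  have h := coord_mul_integrable i i ε
  simpa [sq] using h

lemma coord_sq_integral_val (i : Fin n) (ε : ℝ) (hε : 0 < ε) :
    ∫ z in ball (0 : EuclideanSpace ℝ (Fin n)) ε, (z i) ^ 2 =
      (volume (ball (0 : EuclideanSpace ℝ (Fin n)) 1)).toReal * (ε ^ (n + 2) / (n + 2)) := by
  have hn0 : (n : ℝ) ≠ 0 := Nat.cast_ne_zero.mpr (NeZero.ne n)
  have hsum : ∑ j : Fin n, (∫ z in ball (0 : EuclideanSpace ℝ (Fin n)) ε, (z j) ^ 2)
      = ∫ z in ball (0 : EuclideanSpace ℝ (Fin n)) ε, ‖z‖ ^ 2 := by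
    rw [← integral_finset_sum _ (fun j _ => coord_sq_integrable j ε)]
    refine integral_congr_ae (Eventually.of_forall fun z => ?_)
    show ∑ j : Fin n, (z j) ^ 2 = ‖z‖ ^ 2
    rw [PiLp.norm_sq_eq_of_L2]
    exact Finset.sum_congr rfl fun j _ => by rw [Real.norm_eq_abs, sq_abs]
  have hall : ∀ j : Fin n, (∫ z in ball (0 : EuclideanSpace ℝ (Fin n)) ε, (z j) ^ 2)
      = ∫ z in ball (0 : EuclideanSpace ℝ (Fin n)) ε, (z i) ^ 2 :=
    fun j => coord_sq_integral_ball j i ε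
  rw [Finset.sum_congr rfl (fun j _ => hall j), Finset.sum_const, Finset.card_univ,
    Fintype.card_fin, nsmul_eq_mul, norm_sq_integral_ball ε hε] at hsum
  exact mul_left_cancel₀ hn0 hsum

lemma bilinear_integral_ball
    (H : EuclideanSpace ℝ (Fin n) →L[ℝ] EuclideanSpace ℝ (Fin n) →L[ℝ] ℝ)
    (ε : ℝ) (hε : 0 < ε) :
    ∫ z in ball (0 : EuclideanSpace ℝ (Fin n)) ε, H z z =
      (∑ i, H (EuclideanSpace.single i 1) (EuclideanSpace.single i 1)) *
        ((volume (ball (0 : EuclideanSpace ℝ (Fin n)) 1)).toReal * (ε ^ (n + 2) / (n + 2))) := by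
  have step1 : ∫ z in ball (0 : EuclideanSpace ℝ (Fin n)) ε, H z z
      = ∑ i, ∑ j, H (EuclideanSpace.single i 1) (EuclideanSpace.single j 1) *
          ∫ z in ball (0 : EuclideanSpace ℝ (Fin n)) ε, z i * z j := by
    rw [integral_congr_ae (Eventually.of_forall fun z => bilinear_apply H z),
      integral_finset_sum _ (fun i _ => integrable_finset_sum _
        (fun j _ => (coord_mul_integrable i j ε).const_mul _))]
    exact Finset.sum_congr rfl fun i _ => by
      rw [integral_finset_sum _ (fun j _ => (coord_mul_integrable i j ε).const_mul _)]
      exact Finset.sum_congr rfl fun j _ => integral_const_mul _ _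
  rw [step1]
  have step2 : ∀ i : Fin n, (∑ j, H (EuclideanSpace.single i 1) (EuclideanSpace.single j 1) *
      ∫ z in ball (0 : EuclideanSpace ℝ (Fin n)) ε, z i * z j)
      = H (EuclideanSpace.single i 1) (EuclideanSpace.single i 1) *
        ((volume (ball (0 : EuclideanSpace ℝ (Fin n)) 1)).toReal * (ε ^ (n + 2) / (n + 2))) := by
    intro i
    rw [Finset.sum_eq_single_of_mem i (Finset.mem_univ i)
      (fun j _ hj => by rw [coord_mul_integral_ball i j hj, mul_zero])]
    congr 1
    rw [← coord_sq_integral_val i ε hε]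
    exact integral_congr_ae (Eventually.of_forall fun z => (pow_two (z i)).symm)
  rw [Finset.sum_congr rfl (fun i _ => step2 i), ← Finset.sum_mul]

lemma setIntegral_ball_sub (x : EuclideanSpace ℝ (Fin n)) (f : EuclideanSpace ℝ (Fin n) → ℝ)
    (ε : ℝ) :
    ∫ y in ball x ε, f (y - x) = ∫ z in ball (0 : EuclideanSpace ℝ (Fin n)) ε, f z := by
  rw [← integral_indicator measurableSet_ball, ← integral_indicator measurableSet_ball]
  have key : ∀ y : EuclideanSpace ℝ (Fin n),
      (ball x ε).indicator (fun y => f (y - x)) y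
        = (ball (0 : EuclideanSpace ℝ (Fin n)) ε).indicator f (y - x) := by
    intro y
    by_cases h : y ∈ ball x ε
    · rw [indicator_of_mem h, indicator_of_mem (by rwa [mem_ball_zero_iff, ← mem_ball_iff_norm])]
    · rw [indicator_of_notMem h, indicator_of_notMem (by
        rw [mem_ball_zero_iff, ← mem_ball_iff_norm]; exact h)]
  rw [integral_congr_ae (Eventually.of_forall key),
    integral_sub_right_eq_self ((ball (0 : EuclideanSpace ℝ (Fin n)) ε).indicator f) x]

lemma bilinear_continuous
    (H : EuclideanSpace ℝ (Fin n) →L[ℝ] EuclideanSpace ℝ (Fin n) →L[ℝ] ℝ) :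
    Continuous (fun z : EuclideanSpace ℝ (Fin n) => H z z) :=
  H.continuous₂.comp (continuous_id.prodMk continuous_id)

lemma average_taylor_quadratic
    (L : EuclideanSpace ℝ (Fin n) →L[ℝ] ℝ)
    (H : EuclideanSpace ℝ (Fin n) →L[ℝ] EuclideanSpace ℝ (Fin n) →L[ℝ] ℝ)
    (x : EuclideanSpace ℝ (Fin n)) (ε : ℝ) (hε : 0 < ε) :
    ⨍ y in ball x ε, (L (y - x) + (1/2) * H (y - x) (y - x)) =
      ε ^ 2 * (∑ i, H (EuclideanSpace.single i 1) (EuclideanSpace.single i 1)) /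
        (2 * ((n : ℝ) + 2)) := by
  have hfr : Module.finrank ℝ (EuclideanSpace ℝ (Fin n)) = n := by simp
  have hLint : IntegrableOn (fun z : EuclideanSpace ℝ (Fin n) => L z)
      (ball 0 ε) volume :=
    (ContinuousOn.integrableOn_compact (isCompact_closedBall _ _)
      L.continuous.continuousOn).mono_set ball_subset_closedBall
  have hHint : IntegrableOn (fun z : EuclideanSpace ℝ (Fin n) => H z z)
      (ball 0 ε) volume :=
    (ContinuousOn.integrableOn_compact (isCompact_closedBall _ _)
      (bilinear_continuous H).continuousOn).mono_set ball_subset_closedBall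
  rw [setAverage_eq, measureReal_def, setIntegral_ball_sub x (fun z => L z + (1/2) * H z z) ε,
    integral_add hLint (hHint.const_mul _), linear_integral_ball, integral_const_mul,
    bilinear_integral_ball H ε hε, Measure.addHaar_ball volume x hε.le, hfr]
  have hV1pos : 0 < (volume (ball (0 : EuclideanSpace ℝ (Fin n)) 1)).toReal :=
    ENNReal.toReal_pos (measure_ball_pos volume _ one_pos).ne' measure_ball_lt_top.ne
  rw [ENNReal.toReal_mul, ENNReal.toReal_ofReal (pow_nonneg hε.le n)]
  rw [smul_eq_mul]
  have hεn : (0:ℝ) < ε ^ n := pow_pos hε n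
  have hn2 : ((n : ℝ) + 2) ≠ 0 := by positivity
  rw [show ε ^ (n + 2) = ε ^ n * ε ^ 2 from pow_add ε n 2]
  field_simp
  ring

lemma taylor_second_order
    {g : EuclideanSpace ℝ (Fin n) → ℝ} {U : Set (EuclideanSpace ℝ (Fin n))} (hU : IsOpen U)
    {x : EuclideanSpace ℝ (Fin n)} (hxU : x ∈ U)
    (hdiff : ∀ y ∈ U, DifferentiableAt ℝ g y)
    (hd2 : DifferentiableAt ℝ (fderiv ℝ g) x)
    {η : ℝ} (hη : 0 < η) :
    ∃ δ > 0, ∀ z : EuclideanSpace ℝ (Fin n), ‖z‖ ≤ δ →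
      |g (x + z) - g x - fderiv ℝ g x z
        - (1/2) * fderiv ℝ (fderiv ℝ g) x z z| ≤ η * ‖z‖ ^ 2 := by
  set L := fderiv ℝ g x with hL
  set H := fderiv ℝ (fderiv ℝ g) x with hH
  have hlo : (fun h => fderiv ℝ g (x + h) - fderiv ℝ g x - H h) =o[𝓝 0] (fun h => h) :=
    hasFDerivAt_iff_isLittleO_nhds_zero.mp hd2.hasFDerivAt
  have hev := (isLittleO_iff.mp hlo) hη
  rw [Metric.eventually_nhds_iff] at hev
  obtain ⟨δ₁, hδ₁, hball⟩ := hev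
  obtain ⟨δ₂, hδ₂, hUball⟩ := Metric.isOpen_iff.mp hU x hxU
  refine ⟨min δ₁ δ₂ / 2, by positivity, fun z hz => ?_⟩
  have hzlt : ‖z‖ < min δ₁ δ₂ := lt_of_le_of_lt hz (half_lt_self (lt_min hδ₁ hδ₂))
  have hsz : ∀ s : ℝ, s ∈ Icc (0:ℝ) 1 → ‖s • z‖ ≤ ‖z‖ := by
    intro s hs
    rw [norm_smul, Real.norm_eq_abs, abs_of_nonneg hs.1]
    calc s * ‖z‖ ≤ 1 * ‖z‖ := by
          exact mul_le_mul_of_nonneg_right hs.2 (norm_nonneg z)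
      _ = ‖z‖ := one_mul _
  have hmem : ∀ s : ℝ, s ∈ Icc (0:ℝ) 1 → x + s • z ∈ U := by
    intro s hs
    apply hUball
    rw [mem_ball_iff_norm, add_sub_cancel_left]
    exact lt_of_le_of_lt (hsz s hs) (lt_of_lt_of_le hzlt (min_le_right _ _))
  have hDbound : ∀ s : ℝ, s ∈ Icc (0:ℝ) 1 →
      ‖fderiv ℝ g (x + s • z) - fderiv ℝ g x - H (s • z)‖ ≤ η * ‖z‖ := by
    intro s hs
    have h1 := hball (y := s • z) (by
      rw [dist_zero_right]
      exact lt_of_le_of_lt (hsz s hs) (lt_of_lt_of_le hzlt (min_le_left _ _)))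
    calc ‖fderiv ℝ g (x + s • z) - fderiv ℝ g x - H (s • z)‖
        ≤ η * ‖s • z‖ := by simpa using h1
      _ ≤ η * ‖z‖ := mul_le_mul_of_nonneg_left (hsz s hs) hη.le
  set F : ℝ → ℝ := fun s => g (x + s • z) - s * (L z) - s ^ 2 * (H z z / 2) with hF
  have hFderiv : ∀ s ∈ Icc (0:ℝ) 1, HasDerivWithinAt F
      ((fderiv ℝ g (x + s • z) - L - H (s • z)) z) (Icc 0 1) s := by
    intro s hs
    have hcurve : HasDerivAt (fun s : ℝ => x + s • z) z s := by
      simpa using ((hasDerivAt_id s).smul_const z).const_add x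
    have hg' : HasDerivAt (fun s : ℝ => g (x + s • z)) (fderiv ℝ g (x + s • z) z) s :=
      ((hdiff _ (hmem s hs)).hasFDerivAt.comp_hasDerivAt s hcurve)
    have hlin : HasDerivAt (fun s : ℝ => s * (L z)) (L z) s := hasDerivAt_mul_const (L z)
    have hquad : HasDerivAt (fun s : ℝ => s ^ 2 * (H z z / 2)) (2 * s ^ 1 * (H z z / 2)) s :=
      (hasDerivAt_pow 2 s).mul_const (H z z / 2)
    have := (hg'.sub hlin).sub hquad
    have heq : fderiv ℝ g (x + s • z) z - L z - 2 * s ^ 1 * (H z z / 2)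
        = (fderiv ℝ g (x + s • z) - L - H (s • z)) z := by
      simp only [ContinuousLinearMap.sub_apply, _root_.map_smul,
        ContinuousLinearMap.smul_apply, smul_eq_mul]
      ring
    rw [heq] at this
    exact this.hasDerivWithinAt
  have hFbound : ∀ s ∈ Icc (0:ℝ) 1,
      ‖(fderiv ℝ g (x + s • z) - L - H (s • z)) z‖ ≤ η * ‖z‖ ^ 2 := by
    intro s hs
    calc ‖(fderiv ℝ g (x + s • z) - L - H (s • z)) z‖
        ≤ ‖fderiv ℝ g (x + s • z) - L - H (s • z)‖ * ‖z‖ :=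
          ContinuousLinearMap.le_opNorm _ z
      _ ≤ η * ‖z‖ * ‖z‖ := mul_le_mul_of_nonneg_right (hDbound s hs) (norm_nonneg z)
      _ = η * ‖z‖ ^ 2 := by ring
  have hmvt := Convex.norm_image_sub_le_of_norm_hasDerivWithin_le hFderiv hFbound
    (convex_Icc 0 1) (left_mem_Icc.mpr zero_le_one) (right_mem_Icc.mpr zero_le_one)
  have hF1 : F 1 = g (x + z) - L z - H z z / 2 := by simp [hF]
  have hF0 : F 0 = g x := by simp [hF]
  rw [hF1, hF0] at hmvt
  have : |g (x + z) - L z - H z z / 2 - g x| ≤ η * ‖z‖ ^ 2 := by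
    simpa using hmvt
  calc |g (x + z) - g x - L z - (1/2) * H z z|
      = |g (x + z) - L z - H z z / 2 - g x| := by ring_nf
    _ ≤ η * ‖z‖ ^ 2 := this

end AuxAMVF

set_option maxHeartbeats 4000000 in
theorem asymptotic_mean_value_formula
    (n : ℕ) (hn : 1 ≤ n) (p : ℝ) (hp : 2 < p)
    (Ω : Set (EuclideanSpace ℝ (Fin n))) (hΩ : IsOpen Ω) (T : ℝ) (hT : 0 < T)
    (v : EuclideanSpace ℝ (Fin n) × ℝ → ℝ)
    (hvCont : ContinuousOn v (Ω ×ˢ Ioo 0 T))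
    (hSpDiff : ∀ x ∈ Ω, ∀ t ∈ Ioo (0:ℝ) T,
      DifferentiableAt ℝ (fun y => v (y, t)) x ∧
      DifferentiableAt ℝ (fderiv ℝ (fun y => v (y, t))) x)
    (hTimeDiff : ∀ x ∈ Ω, ∀ t ∈ Ioo (0:ℝ) T, DifferentiableAt ℝ (fun s => v (x, s)) t)
    (hGradCont : ContinuousOn
      (fun q : EuclideanSpace ℝ (Fin n) × ℝ => fderiv ℝ (fun y => v (y, q.2)) q.1)
      (Ω ×ˢ Ioo 0 T))
    (hHessCont : ContinuousOn
      (fun q : EuclideanSpace ℝ (Fin n) × ℝ => fderiv ℝ (fderiv ℝ (fun y => v (y, q.2))) q.1)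
      (Ω ×ˢ Ioo 0 T))
    (hTimeCont : ContinuousOn
      (fun q : EuclideanSpace ℝ (Fin n) × ℝ => deriv (fun s => v (q.1, s)) q.2)
      (Ω ×ˢ Ioo 0 T))
    (x : EuclideanSpace ℝ (Fin n)) (hx : x ∈ Ω) (t : ℝ) (ht : t ∈ Ioo (0:ℝ) T) :
    (fun ε : ℝ =>
      (((n : ℝ) + 2) / (p + n)) * (⨍ y in ball x ε, v (y, t - ε ^ 2)) +
      ((p - 2) / (p + n)) *
        (⨆ σ : sphere (0 : EuclideanSpace ℝ (Fin n)) 1,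
          (v (x + ε • (σ : EuclideanSpace ℝ (Fin n)), t - ε ^ 2) +
           v (x - ε • (σ : EuclideanSpace ℝ (Fin n)), t - ε ^ 2)) / 2) -
      (v (x, t) + ε ^ 2 / (2 * ((n : ℝ) + p)) *
        ((∑ i : Fin n, fderiv ℝ (fderiv ℝ (fun y => v (y, t))) x
            (EuclideanSpace.single i 1) (EuclideanSpace.single i 1)) +
         (p - 2) *
          (⨆ σ : sphere (0 : EuclideanSpace ℝ (Fin n)) 1,
            fderiv ℝ (fderiv ℝ (fun y => v (y, t))) x
              (σ : EuclideanSpace ℝ (Fin n)) (σ : EuclideanSpace ℝ (Fin n))) -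
         2 * ((n : ℝ) + p) * deriv (fun s => v (x, s)) t)))
      =o[𝓝[>] (0 : ℝ)] (fun ε => ε ^ 2) := by
  haveI : NeZero n := ⟨by omega⟩
  have hpn : (0:ℝ) < p + n := by
    have : (1:ℝ) ≤ n := by exact_mod_cast hn
    linarith
  set g : EuclideanSpace ℝ (Fin n) → ℝ := fun y => v (y, t) with hg
  set L : EuclideanSpace ℝ (Fin n) →L[ℝ] ℝ := fderiv ℝ g x with hLdef
  set H : EuclideanSpace ℝ (Fin n) →L[ℝ] EuclideanSpace ℝ (Fin n) →L[ℝ] ℝ :=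
    fderiv ℝ (fderiv ℝ g) x with hHdef
  set c : ℝ := deriv (fun s => v (x, s)) t with hcdef
  set tr : ℝ := ∑ i : Fin n, H (EuclideanSpace.single i 1) (EuclideanSpace.single i 1)
    with htrdef
  set M : ℝ := ⨆ σ : sphere (0 : EuclideanSpace ℝ (Fin n)) 1,
    H (σ : EuclideanSpace ℝ (Fin n)) (σ : EuclideanSpace ℝ (Fin n)) with hMdef
  set A : ℝ → ℝ := fun ε => ⨍ y in ball x ε, v (y, t - ε ^ 2) with hAdef
  set S : ℝ → ℝ := fun ε =>
    ⨆ σ : sphere (0 : EuclideanSpace ℝ (Fin n)) 1,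
      (v (x + ε • (σ : EuclideanSpace ℝ (Fin n)), t - ε ^ 2) +
       v (x - ε • (σ : EuclideanSpace ℝ (Fin n)), t - ε ^ 2)) / 2 with hSdef
  obtain ⟨ρ, hρpos, hρball⟩ := Metric.isOpen_iff.mp hΩ x hx
  have key : ∀ η : ℝ, 0 < η → ∃ δ : ℝ, 0 < δ ∧ δ ≤ 1 ∧ δ ≤ t ∧ δ ≤ ρ ∧
      ∀ ε : ℝ, 0 < ε → ε < δ → ∀ z : EuclideanSpace ℝ (Fin n), ‖z‖ ≤ ε →
        |v (x + z, t - ε ^ 2) - v (x, t) + ε ^ 2 * c - L z - (1/2) * H z z| ≤ η * ε ^ 2 := by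
    intro η hη
    obtain ⟨δs, hδs, hTs⟩ := taylor_second_order hΩ hx
      (fun y hy => (hSpDiff y hy t ht).1) ((hSpDiff x hx t ht).2) (half_pos hη)
    have hct : ContinuousAt
        (fun q : EuclideanSpace ℝ (Fin n) × ℝ => deriv (fun s => v (q.1, s)) q.2) (x, t) :=
      hTimeCont.continuousAt ((hΩ.prod isOpen_Ioo).mem_nhds ⟨hx, ht⟩)
    rw [Metric.continuousAt_iff] at hct
    obtain ⟨δt, hδt, hballt⟩ := hct (η / 2) (half_pos hη)
    set δ : ℝ := min (min δs δt) (min 1 (min t ρ)) with hδdef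
    have hδpos : 0 < δ := lt_min (lt_min hδs hδt) (lt_min one_pos (lt_min ht.1 hρpos))
    refine ⟨δ, hδpos, ?_, ?_, ?_, fun ε hε hεδ z hz => ?_⟩
    · exact le_trans (min_le_right _ _) (min_le_left _ _)
    · exact le_trans (min_le_right _ _) (le_trans (min_le_right _ _) (min_le_left _ _))
    · exact le_trans (min_le_right _ _) (le_trans (min_le_right _ _) (min_le_right _ _))
    have hεδs : ε < δs := lt_of_lt_of_le hεδ (le_trans (min_le_left _ _) (min_le_left _ _))
    have hεδt : ε < δt := lt_of_lt_of_le hεδ (le_trans (min_le_left _ _) (min_le_right _ _))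
    have hε1 : ε ≤ 1 := le_of_lt (lt_of_lt_of_le hεδ
      (le_trans (min_le_right _ _) (min_le_left _ _)))
    have hεt : ε < t := lt_of_lt_of_le hεδ
      (le_trans (min_le_right _ _) (le_trans (min_le_right _ _) (min_le_left _ _)))
    have hερ : ε < ρ := lt_of_lt_of_le hεδ
      (le_trans (min_le_right _ _) (le_trans (min_le_right _ _) (min_le_right _ _)))
    have hε2 : ε ^ 2 ≤ ε := by rw [sq]; exact mul_le_of_le_one_left hε.le hε1
    have hmemΩ : x + z ∈ Ω := by
      apply hρball
      rw [mem_ball_iff_norm, add_sub_cancel_left]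
      exact lt_of_le_of_lt hz hερ
    -- spatial estimate
    have hspace : |g (x + z) - g x - L z - (1/2) * H z z| ≤ η / 2 * ε ^ 2 := by
      refine le_trans (hTs z (le_of_lt (lt_of_le_of_lt hz hεδs))) ?_
      exact mul_le_mul_of_nonneg_left (pow_le_pow_left₀ (norm_nonneg z) hz 2)
        (le_of_lt (half_pos hη))
    -- time estimate
    have htIcc : ∀ s ∈ Icc (t - ε ^ 2) t, s ∈ Ioo (0:ℝ) T := by
      intro s hs
      constructor
      · have h0 : t - ε ^ 2 > 0 := by linarith
        linarith [hs.1]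
      · exact lt_of_le_of_lt hs.2 ht.2
    have hderivb : ∀ s ∈ Icc (t - ε ^ 2) t,
        ‖deriv (fun s' => v (x + z, s')) s - c‖ ≤ η / 2 := by
      intro s hs
      have hdist : dist ((x + z, s) : EuclideanSpace ℝ (Fin n) × ℝ) (x, t) < δt := by
        rw [Prod.dist_eq]
        apply max_lt
        · rw [dist_eq_norm, add_sub_cancel_left]
          exact lt_of_le_of_lt hz hεδt
        · rw [Real.dist_eq]
          have habs : |s - t| ≤ ε ^ 2 := by
            rw [abs_le]
            constructor
            · linarith [hs.1]
            · linarith [hs.2, sq_nonneg ε]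
          exact lt_of_le_of_lt habs (lt_of_le_of_lt hε2 hεδt)
      have := hballt hdist
      rw [Real.dist_eq] at this
      rw [Real.norm_eq_abs]
      exact le_of_lt this
    have hG : ∀ s ∈ Icc (t - ε ^ 2) t, HasDerivWithinAt
        (fun s' => v (x + z, s') - c * s')
        (deriv (fun s' => v (x + z, s')) s - c) (Icc (t - ε ^ 2) t) s := by
      intro s hs
      have h := ((hTimeDiff (x + z) hmemΩ s (htIcc s hs)).hasDerivAt.sub
        ((hasDerivAt_id s).const_mul c)).hasDerivWithinAt (s := Icc (t - ε ^ 2) t)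
      simp only [mul_one] at h
      exact h
    have htmem1 : t - ε ^ 2 ∈ Icc (t - ε ^ 2) t := ⟨le_refl _, by linarith [sq_nonneg ε]⟩
    have htmem2 : t ∈ Icc (t - ε ^ 2) t := ⟨by linarith [sq_nonneg ε], le_refl _⟩
    have hmvt := Convex.norm_image_sub_le_of_norm_hasDerivWithin_le hG hderivb
      (convex_Icc _ _) htmem2 htmem1
    have htime : |v (x + z, t - ε ^ 2) - g (x + z) + ε ^ 2 * c| ≤ η / 2 * ε ^ 2 := by
      have heq : v (x + z, t - ε ^ 2) - c * (t - ε ^ 2) - (v (x + z, t) - c * t)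
          = v (x + z, t - ε ^ 2) - g (x + z) + ε ^ 2 * c := by
        simp only [hg]
        ring
      rw [Real.norm_eq_abs, heq] at hmvt
      refine le_trans hmvt ?_
      rw [Real.norm_eq_abs, show t - ε ^ 2 - t = -(ε^2) by ring, abs_neg,
        abs_of_nonneg (by positivity)]
    calc |v (x + z, t - ε ^ 2) - v (x, t) + ε ^ 2 * c - L z - (1/2) * H z z|
        = |(v (x + z, t - ε ^ 2) - g (x + z) + ε ^ 2 * c)
            + (g (x + z) - g x - L z - (1/2) * H z z)| := by
          rw [hg]
          ring_nf
      _ ≤ |v (x + z, t - ε ^ 2) - g (x + z) + ε ^ 2 * c|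
            + |g (x + z) - g x - L z - (1/2) * H z z| := abs_add_le _ _
      _ ≤ η / 2 * ε ^ 2 + η / 2 * ε ^ 2 := add_le_add htime hspace
      _ = η * ε ^ 2 := by ring
  have h₁ : (fun ε : ℝ => A ε - v (x, t) + ε ^ 2 * c - ε ^ 2 * tr / (2 * ((n:ℝ) + 2)))
      =o[𝓝[>] (0 : ℝ)] (fun ε => ε ^ 2) := by
    rw [isLittleO_iff]
    intro C hC
    obtain ⟨δ, hδpos, hδ1, hδt, hδρ, hkey⟩ := key C hC
    filter_upwards [Ioo_mem_nhdsGT_of_mem (⟨le_refl (0:ℝ), hδpos⟩ : (0:ℝ) ∈ Ico 0 δ)]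
      with ε hε
    have hε2 : ε ^ 2 ≤ ε := by
      rw [sq]
      exact mul_le_of_le_one_left hε.1.le (le_of_lt (lt_of_lt_of_le hε.2 hδ1))
    have hballΩ : closedBall x ε ⊆ Ω := fun y hy =>
      hρball (lt_of_le_of_lt (mem_closedBall.mp hy) (lt_of_lt_of_le hε.2 hδρ))
    have htmem : t - ε ^ 2 ∈ Ioo (0:ℝ) T := by
      constructor
      · have : ε < t := lt_of_lt_of_le hε.2 hδt
        linarith
      · linarith [sq_nonneg ε, ht.2]
    set w : EuclideanSpace ℝ (Fin n) → ℝ := fun y => v (y, t - ε ^ 2) with hwdef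
    set ψ : EuclideanSpace ℝ (Fin n) → ℝ := fun y =>
      w y - (v (x, t) - ε ^ 2 * c) - (L (y - x) + (1/2) * H (y - x) (y - x)) with hψdef
    have hvolpos : 0 < (volume (ball x ε)).toReal :=
      ENNReal.toReal_pos (measure_ball_pos volume x hε.1).ne' measure_ball_lt_top.ne
    have hwcont : ContinuousOn w (closedBall x ε) := by
      refine ContinuousOn.comp hvCont
        ((continuous_id.prodMk continuous_const).continuousOn) (fun y hy => ?_)
      exact ⟨hballΩ hy, htmem⟩
    have hwint : IntegrableOn w (ball x ε) volume :=
      (ContinuousOn.integrableOn_compact (isCompact_closedBall _ _) hwcont).mono_set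
        ball_subset_closedBall
    have hconstint : IntegrableOn (fun _ : EuclideanSpace ℝ (Fin n) => v (x, t) - ε ^ 2 * c)
        (ball x ε) volume := integrableOn_const measure_ball_lt_top.ne
    have hquadcont : Continuous (fun y : EuclideanSpace ℝ (Fin n) =>
        L (y - x) + (1/2) * H (y - x) (y - x)) := by
      have hc1 : Continuous (fun y : EuclideanSpace ℝ (Fin n) => y - x) :=
        continuous_id.sub continuous_const
      exact (L.continuous.comp hc1).add
        (continuous_const.mul ((bilinear_continuous H).comp hc1))
    have hquadint : IntegrableOn (fun y : EuclideanSpace ℝ (Fin n) =>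
        L (y - x) + (1/2) * H (y - x) (y - x)) (ball x ε) volume :=
      (ContinuousOn.integrableOn_compact (isCompact_closedBall _ _)
        hquadcont.continuousOn).mono_set ball_subset_closedBall
    have hψint : IntegrableOn ψ (ball x ε) volume := (hwint.sub hconstint).sub hquadint
    have hint : ∫ y in ball x ε, ψ y = (∫ y in ball x ε, w y)
        - (v (x, t) - ε ^ 2 * c) * (volume (ball x ε)).toReal
        - ∫ y in ball x ε, (L (y - x) + (1/2) * H (y - x) (y - x)) := by
      have i1 : (∫ y in ball x ε, ψ y) = (∫ y in ball x ε, (w y - (v (x, t) - ε ^ 2 * c)))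
          - ∫ y in ball x ε, (L (y - x) + (1/2) * H (y - x) (y - x)) :=
        integral_sub (hwint.sub hconstint) hquadint
      have i2 : (∫ y in ball x ε, (w y - (v (x, t) - ε ^ 2 * c)))
          = (∫ y in ball x ε, w y) - ∫ _y in ball x ε, (v (x, t) - ε ^ 2 * c) :=
        integral_sub hwint hconstint
      rw [i1, i2, setIntegral_const, smul_eq_mul, measureReal_def]
      ring
    have hq := average_taylor_quadratic L H x ε hε.1
    rw [← htrdef] at hq
    have hAfin : A ε - v (x, t) + ε ^ 2 * c - ε ^ 2 * tr / (2 * ((n:ℝ) + 2))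
        = ⨍ y in ball x ε, ψ y := by
      have h1' : A ε = (volume (ball x ε)).toReal⁻¹ * ∫ y in ball x ε, w y := by
        rw [show A ε = ⨍ y in ball x ε, w y from rfl, setAverage_eq, measureReal_def, smul_eq_mul]
      have h2' : (volume (ball x ε)).toReal⁻¹ *
          (∫ y in ball x ε, (L (y - x) + (1/2) * H (y - x) (y - x)))
          = ε ^ 2 * tr / (2 * ((n:ℝ) + 2)) := by
        rw [← smul_eq_mul, ← measureReal_def, ← setAverage_eq, hq]
      have h3' : (volume (ball x ε)).toReal⁻¹ *
          ((v (x, t) - ε ^ 2 * c) * (volume (ball x ε)).toReal)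
          = v (x, t) - ε ^ 2 * c := by
        field_simp
      rw [setAverage_eq, measureReal_def, smul_eq_mul, hint, mul_sub, mul_sub, h2', h3', ← h1']
      ring
    have hψb : ∀ y ∈ ball x ε, ‖ψ y‖ ≤ C * ε ^ 2 := by
      intro y hy
      have hz := hkey ε hε.1 hε.2 (y - x)
        (by rw [← dist_eq_norm]; exact le_of_lt (mem_ball.mp hy))
      rw [show x + (y - x) = y by rw [add_comm, sub_add_cancel]] at hz
      calc ‖ψ y‖ = |v (y, t - ε ^ 2) - v (x, t) + ε ^ 2 * c - L (y - x)
          - 1/2 * H (y - x) (y - x)| := by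
            rw [Real.norm_eq_abs]
            congr 1
            show w y - (v (x, t) - ε ^ 2 * c) - (L (y - x) + (1/2) * H (y - x) (y - x)) = _
            ring
        _ ≤ C * ε ^ 2 := hz
    have hIψ := norm_setIntegral_le_of_norm_le_const (μ := volume) (s := ball x ε)
      measure_ball_lt_top hψb
    rw [hAfin, setAverage_eq, measureReal_def, smul_eq_mul, Real.norm_eq_abs, Real.norm_eq_abs, abs_mul,
      abs_inv, abs_of_nonneg ENNReal.toReal_nonneg,
      abs_of_nonneg (sq_nonneg ε)]
    rw [Real.norm_eq_abs, measureReal_def] at hIψ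
    calc (volume (ball x ε)).toReal⁻¹ * |∫ y in ball x ε, ψ y|
        ≤ (volume (ball x ε)).toReal⁻¹ * (C * ε ^ 2 * (volume (ball x ε)).toReal) :=
          mul_le_mul_of_nonneg_left hIψ (inv_nonneg.mpr ENNReal.toReal_nonneg)
      _ = C * ε ^ 2 := by field_simp
  have hMbdd : BddAbove (range fun σ : sphere (0 : EuclideanSpace ℝ (Fin n)) 1 =>
      H (σ : EuclideanSpace ℝ (Fin n)) (σ : EuclideanSpace ℝ (Fin n))) := by
    refine ⟨‖H‖, fun y hy => ?_⟩
    obtain ⟨σ, rfl⟩ := hy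
    have hσn : ‖(σ : EuclideanSpace ℝ (Fin n))‖ = 1 := mem_sphere_zero_iff_norm.mp σ.2
    calc H (σ : EuclideanSpace ℝ (Fin n)) (σ : EuclideanSpace ℝ (Fin n))
        ≤ ‖H (σ : EuclideanSpace ℝ (Fin n)) (σ : EuclideanSpace ℝ (Fin n))‖ :=
          le_trans (le_abs_self _) (le_of_eq (Real.norm_eq_abs _).symm)
      _ ≤ ‖H (σ : EuclideanSpace ℝ (Fin n))‖ * ‖(σ : EuclideanSpace ℝ (Fin n))‖ :=
          ContinuousLinearMap.le_opNorm _ _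
      _ ≤ (‖H‖ * ‖(σ : EuclideanSpace ℝ (Fin n))‖) * ‖(σ : EuclideanSpace ℝ (Fin n))‖ :=
          mul_le_mul_of_nonneg_right (ContinuousLinearMap.le_opNorm _ _) (norm_nonneg _)
      _ = ‖H‖ := by rw [hσn]; ring
  haveI hsphne : Nonempty (sphere (0 : EuclideanSpace ℝ (Fin n)) 1) :=
    ⟨⟨EuclideanSpace.single (⟨0, by omega⟩ : Fin n) (1:ℝ), by
      simp [mem_sphere_zero_iff_norm, EuclideanSpace.norm_single]⟩⟩
  have h₂ : (fun ε : ℝ => S ε - v (x, t) + ε ^ 2 * c - ε ^ 2 * M / 2)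
      =o[𝓝[>] (0 : ℝ)] (fun ε => ε ^ 2) := by
    rw [isLittleO_iff]
    intro C hC
    obtain ⟨δ, hδpos, hδ1, hδt, hδρ, hkey⟩ := key (C / 2) (half_pos hC)
    filter_upwards [Ioo_mem_nhdsGT_of_mem (⟨le_refl (0:ℝ), hδpos⟩ : (0:ℝ) ∈ Ico 0 δ)]
      with ε hε
    set η' : ℝ := C / 2 with hη'def
    have hη' : 0 < η' := half_pos hC
    have hptwise : ∀ σ : sphere (0 : EuclideanSpace ℝ (Fin n)) 1,
        |(v (x + ε • (σ : EuclideanSpace ℝ (Fin n)), t - ε ^ 2) +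
          v (x - ε • (σ : EuclideanSpace ℝ (Fin n)), t - ε ^ 2)) / 2 -
          (v (x, t) - ε ^ 2 * c + ε ^ 2 / 2 *
            H (σ : EuclideanSpace ℝ (Fin n)) (σ : EuclideanSpace ℝ (Fin n)))| ≤ η' * ε ^ 2 := by
      intro σ
      have hσn : ‖(σ : EuclideanSpace ℝ (Fin n))‖ = 1 := mem_sphere_zero_iff_norm.mp σ.2
      have hzn : ‖ε • (σ : EuclideanSpace ℝ (Fin n))‖ = ε := by
        rw [norm_smul, hσn, Real.norm_eq_abs, abs_of_pos hε.1, mul_one]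
      have h1 := hkey ε hε.1 hε.2 (ε • (σ : EuclideanSpace ℝ (Fin n))) (le_of_eq hzn)
      have h2 := hkey ε hε.1 hε.2 (-(ε • (σ : EuclideanSpace ℝ (Fin n))))
        (by rw [norm_neg]; exact le_of_eq hzn)
      rw [show x + -(ε • (σ : EuclideanSpace ℝ (Fin n)))
        = x - ε • (σ : EuclideanSpace ℝ (Fin n)) from (sub_eq_add_neg x _).symm] at h2
      simp only [map_neg, ContinuousLinearMap.neg_apply, neg_neg, sub_neg_eq_add] at h2
      have hquad : H (ε • (σ : EuclideanSpace ℝ (Fin n))) (ε • (σ : EuclideanSpace ℝ (Fin n)))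
          = ε ^ 2 * H (σ : EuclideanSpace ℝ (Fin n)) (σ : EuclideanSpace ℝ (Fin n)) := by
        rw [show H (ε • (σ : EuclideanSpace ℝ (Fin n))) = ε • H (σ : EuclideanSpace ℝ (Fin n))
          from _root_.map_smul H ε _, ContinuousLinearMap.smul_apply, _root_.map_smul,
          smul_eq_mul, smul_eq_mul]
        ring
      rw [hquad] at h1 h2
      set a := v (x + ε • (σ : EuclideanSpace ℝ (Fin n)), t - ε ^ 2) with hadef
      set b := v (x - ε • (σ : EuclideanSpace ℝ (Fin n)), t - ε ^ 2) with hbdef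
      set ℓ := L (ε • (σ : EuclideanSpace ℝ (Fin n))) with hℓdef
      set q := H (σ : EuclideanSpace ℝ (Fin n)) (σ : EuclideanSpace ℝ (Fin n)) with hqdef
      have heq : (a + b) / 2 - (v (x, t) - ε ^ 2 * c + ε ^ 2 / 2 * q)
          = ((a - v (x, t) + ε ^ 2 * c - ℓ - 1 / 2 * (ε ^ 2 * q))
            + (b - v (x, t) + ε ^ 2 * c + ℓ - 1 / 2 * (ε ^ 2 * q))) / 2 := by ring
      rw [heq, abs_div, abs_two]
      have htri := abs_add_le (a - v (x, t) + ε ^ 2 * c - ℓ - 1 / 2 * (ε ^ 2 * q))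
        (b - v (x, t) + ε ^ 2 * c + ℓ - 1 / 2 * (ε ^ 2 * q))
      linarith only [h1, h2, htri, hη'def]
    have hfbdd : BddAbove (range fun σ : sphere (0 : EuclideanSpace ℝ (Fin n)) 1 =>
        (v (x + ε • (σ : EuclideanSpace ℝ (Fin n)), t - ε ^ 2) +
         v (x - ε • (σ : EuclideanSpace ℝ (Fin n)), t - ε ^ 2)) / 2) := by
      refine ⟨v (x, t) - ε ^ 2 * c + ε ^ 2 / 2 * M + η' * ε ^ 2, fun y hy => ?_⟩
      obtain ⟨σ, rfl⟩ := hy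
      have h := (abs_le.mp (hptwise σ)).2
      have hσM : ε ^ 2 / 2 * H (σ : EuclideanSpace ℝ (Fin n)) (σ : EuclideanSpace ℝ (Fin n))
          ≤ ε ^ 2 / 2 * M := mul_le_mul_of_nonneg_left (le_ciSup hMbdd σ) (by positivity)
      linarith only [h, hσM]
    have hSval : S ε = ⨆ σ : sphere (0 : EuclideanSpace ℝ (Fin n)) 1,
        (v (x + ε • (σ : EuclideanSpace ℝ (Fin n)), t - ε ^ 2) +
         v (x - ε • (σ : EuclideanSpace ℝ (Fin n)), t - ε ^ 2)) / 2 := rfl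
    have hub : S ε ≤ v (x, t) - ε ^ 2 * c + ε ^ 2 / 2 * M + η' * ε ^ 2 := by
      rw [hSval]
      refine ciSup_le fun σ => ?_
      have h := (abs_le.mp (hptwise σ)).2
      have hσM : ε ^ 2 / 2 * H (σ : EuclideanSpace ℝ (Fin n)) (σ : EuclideanSpace ℝ (Fin n))
          ≤ ε ^ 2 / 2 * M := mul_le_mul_of_nonneg_left (le_ciSup hMbdd σ) (by positivity)
      linarith only [h, hσM]
    obtain ⟨σ₀, hσ₀⟩ := exists_lt_of_lt_ciSup
      (show M - η' < ⨆ σ : sphere (0 : EuclideanSpace ℝ (Fin n)) 1,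
        H (σ : EuclideanSpace ℝ (Fin n)) (σ : EuclideanSpace ℝ (Fin n)) from by
        rw [← hMdef]; linarith)
    have hlb : v (x, t) - ε ^ 2 * c + ε ^ 2 / 2 * M - (η' * ε ^ 2 + η' * ε ^ 2) ≤ S ε := by
      rw [hSval]
      refine le_trans ?_ (le_ciSup hfbdd σ₀)
      have h := (abs_le.mp (hptwise σ₀)).1
      have hσM : ε ^ 2 / 2 * (M - η') ≤ ε ^ 2 / 2 *
          H (σ₀ : EuclideanSpace ℝ (Fin n)) (σ₀ : EuclideanSpace ℝ (Fin n)) :=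
        mul_le_mul_of_nonneg_left (le_of_lt hσ₀) (by positivity)
      have hexp : ε ^ 2 / 2 * (M - η') = ε ^ 2 / 2 * M - η' * ε ^ 2 / 2 := by ring
      have hηε : 0 ≤ η' * ε ^ 2 := by positivity
      linarith only [h, hσM, hexp, hηε]
    rw [Real.norm_eq_abs, Real.norm_eq_abs, abs_of_nonneg (sq_nonneg ε), abs_le]
    have hb1 : ε ^ 2 * M / 2 = ε ^ 2 / 2 * M := by ring
    have hCη : C * ε ^ 2 = η' * ε ^ 2 + η' * ε ^ 2 := by rw [hη'def]; ring
    have hηε : 0 ≤ η' * ε ^ 2 := by positivity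
    constructor
    · linarith only [hlb, hb1, hCη, hηε]
    · linarith only [hub, hb1, hCη, hηε]
  have hsum := (h₁.const_mul_left (((n : ℝ) + 2) / (p + n))).add
    (h₂.const_mul_left ((p - 2) / (p + n)))
  refine hsum.congr' (Eventually.of_forall fun ε => ?_) (Eventually.of_forall fun ε => rfl)
  have hn2 : ((n:ℝ) + 2) ≠ 0 := by positivity
  field_simp
  ring
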